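/- Let [b1, ..., bk] be a list of integers with each bi ≥ 2, and write hj([b1,...,bk]) = m/n in lowest terms (m, n positive coprime integers). Let M be the k×k symmetric tridiagonal matrix with diagonal entries M_{ii} = -b_i and off-diagonal entries M_{i,i+1} = M_{i+1,i} = 1 (all other entries 0). Then det(M) = (-1)^k · m. -/

import Mathlib

def hj : List ℤ → ℚ
  | [] => 0
  | b :: l => (b : ℚ) - 1 / hj l

/-- The intersection matrix of the linear plumbing with weights `-b₁, …, -bₖ`. -/
def plumbingMatrix (l : List ℤ) : Matrix (Fin l.length) (Fin l.length) ℤ :=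
  fun i j =>
    if i = j then -(l.get i)
    else if (i : ℕ) + 1 = (j : ℕ) ∨ (j : ℕ) + 1 = (i : ℕ) then 1 else 0


lemma pm_off {l : List ℤ} {i j : Fin l.length} (h : (i : ℕ) ≠ (j : ℕ))
    (h2 : ¬((i : ℕ) + 1 = (j : ℕ) ∨ (j : ℕ) + 1 = (i : ℕ))) :
    plumbingMatrix l i j = 0 := by
  have h' : i ≠ j := by rintro rfl; omega
  simp [plumbingMatrix, h', h2]

lemma pm_adj {l : List ℤ} {i j : Fin l.length}
    (h2 : (i : ℕ) + 1 = (j : ℕ) ∨ (j : ℕ) + 1 = (i : ℕ)) :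
    plumbingMatrix l i j = 1 := by
  have h : i ≠ j := by rintro rfl; omega
  simp [plumbingMatrix, h, h2]

lemma sub1 (a : ℤ) (l : List ℤ) :
    (plumbingMatrix (a::l)).submatrix Fin.succ Fin.succ = plumbingMatrix l := by
  ext i j
  simp only [plumbingMatrix, Matrix.submatrix_apply, Fin.succ_inj, Fin.val_succ,
    List.get_cons_succ]
  congr 2
  simp only [eq_iff_iff]
  omega

lemma sub2 (b c : ℤ) (t : List ℤ) :
    ((plumbingMatrix (b::c::t)).submatrix
      (Fin.succ : Fin (t.length + 1) → Fin (t.length + 1 + 1))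
      (Fin.succ (0 : Fin (t.length + 1))).succAbove).det = (plumbingMatrix t).det := by
  rw [Matrix.det_succ_column_zero, Fin.sum_univ_succ]
  have h1 : ((plumbingMatrix (b::c::t)).submatrix Fin.succ
      (Fin.succ (0 : Fin (t.length + 1))).succAbove) (0 : Fin (t.length+1)) (0 : Fin (t.length+1)) = 1 := by
    simp only [Matrix.submatrix_apply, Fin.succ_succAbove_zero]
    exact pm_adj (by simp)
  have h2 : ∀ i : Fin t.length, ((plumbingMatrix (b::c::t)).submatrix Fin.succ
      (Fin.succ (0 : Fin (t.length + 1))).succAbove) i.succ (0 : Fin (t.length+1)) = 0 := by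
    intro i
    simp only [Matrix.submatrix_apply, Fin.succ_succAbove_zero]
    exact pm_off (by simp) (by simp)
  have h3 : ((plumbingMatrix (b::c::t)).submatrix Fin.succ
      (Fin.succ (0 : Fin (t.length + 1))).succAbove).submatrix
      (Fin.succAbove 0) Fin.succ = plumbingMatrix t := by
    rw [Matrix.submatrix_submatrix]
    have e1 : (Fin.succ (0 : Fin (t.length + 1))).succAbove ∘ Fin.succ
        = Fin.succ ∘ Fin.succ := by
      funext j
      simpa using Fin.succ_succAbove_succ (0 : Fin (t.length + 1)) j
    rw [e1, Fin.succAbove_zero]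
    have e2 : (Fin.succ ∘ Fin.succ : Fin t.length → Fin (t.length+1+1))
        = (Fin.succ : Fin (t.length+1) → _) ∘ (Fin.succ : Fin t.length → _) := rfl
    rw [e2, ← Matrix.submatrix_submatrix, sub1, sub1]
  rw [h1, h3]
  have hz : ∀ x : Fin t.length,
      plumbingMatrix (b::c::t) x.succ.succ (0 : Fin (t.length+1+1)) = 0 :=
    fun x => pm_off (by simp) (by simp)
  simp [hz]

lemma det_rec (b c : ℤ) (t : List ℤ) :
    (plumbingMatrix (b::c::t)).det
      = -b * (plumbingMatrix (c::t)).det - (plumbingMatrix t).det := by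
  rw [Matrix.det_succ_row_zero]
  simp only [List.length_cons]
  rw [Fin.sum_univ_succ, Fin.sum_univ_succ]
  have h0 : plumbingMatrix (b::c::t) (0 : Fin (t.length+1+1)) (0 : Fin (t.length+1+1)) = -b := by
    simp [plumbingMatrix]
  have h1 : plumbingMatrix (b::c::t) (0 : Fin (t.length+1+1)) (Fin.succ (0 : Fin (t.length+1))) = 1 :=
    pm_adj (by simp)
  have h2 : ∀ i : Fin t.length,
      plumbingMatrix (b::c::t) (0 : Fin (t.length+1+1)) i.succ.succ = 0 := by
    intro i
    exact pm_off (by simp) (by simp)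
  have h3 : ((plumbingMatrix (b::c::t)).submatrix
      (Fin.succ : Fin (t.length+1) → Fin (t.length+1+1))
      (Fin.succAbove (0 : Fin (t.length+1+1)))).det = (plumbingMatrix (c::t)).det := by
    rw [Fin.succAbove_zero, sub1]
  rw [h0, h1, h3, sub2, Finset.sum_eq_zero (fun i _ => by rw [h2 i]; ring)]
  simp
  ring

def PQ : List ℤ → ℤ × ℤ
  | [] => (1, 0)
  | b :: t => (b * (PQ t).1 - (PQ t).2, (PQ t).1)

lemma PQ_pos : ∀ l : List ℤ, (∀ b ∈ l, 2 ≤ b) → (PQ l).2 < (PQ l).1 ∧ 0 ≤ (PQ l).2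
  | [] => fun _ => by simp [PQ]
  | b :: t => fun h => by
    have ht := PQ_pos t (fun x hx => h x (List.mem_cons_of_mem _ hx))
    have hb : 2 ≤ b := h b (List.mem_cons_self)
    simp only [PQ]
    constructor
    · nlinarith [ht.1, ht.2]
    · omega

lemma PQ_cop : ∀ l : List ℤ, IsCoprime (PQ l).1 (PQ l).2
  | [] => by simp [PQ, isCoprime_one_left]
  | b :: t => by
    have ht := PQ_cop t
    simp only [PQ]
    have : b * (PQ t).1 - (PQ t).2 = -(PQ t).2 + (PQ t).1 * b := by ring
    rw [this]
    exact (ht.symm.neg_left).add_mul_left_left b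

lemma hj_eq : ∀ l : List ℤ, (∀ b ∈ l, 2 ≤ b) →
    hj l = ((PQ l).1 : ℚ) / ((PQ l).2 : ℚ)
  | [] => fun _ => by simp [hj, PQ]
  | b :: t => fun h => by
    have ht := hj_eq t (fun x hx => h x (List.mem_cons_of_mem _ hx))
    have hpos := PQ_pos t (fun x hx => h x (List.mem_cons_of_mem _ hx))
    have hp : (0 : ℚ) < ((PQ t).1 : ℚ) := by exact_mod_cast lt_of_le_of_lt hpos.2 hpos.1
    simp only [hj, PQ, ht]
    rw [one_div_div]
    push_cast
    field_simp

lemma detP : ∀ l : List ℤ, (plumbingMatrix l).det = (-1) ^ l.length * (PQ l).1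
  | [] => by
    simp [PQ, Matrix.det_fin_zero]
  | [b] => by
    have : (plumbingMatrix [b]).det
        = plumbingMatrix [b] (0 : Fin 1) (0 : Fin 1) := Matrix.det_fin_one _
    rw [this]
    simp [plumbingMatrix, PQ]
  | b :: c :: t => by
    rw [det_rec, detP (c :: t), detP t]
    simp only [PQ, List.length_cons, pow_succ]
    ring

theorem det_plumbing (l : List ℤ) (hne : l ≠ []) (hall : ∀ b ∈ l, 2 ≤ b)
    (m n : ℕ) (hm : 0 < m) (hn : 0 < n) (hcop : Nat.Coprime m n)
    (hhj : hj l = (m : ℚ) / (n : ℚ)) :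
    (plumbingMatrix l).det = (-1) ^ l.length * (m : ℤ) := by
  rw [detP]
  congr 1
  -- show (PQ l).1 = m
  obtain ⟨b, t, rfl⟩ : ∃ b t, l = b :: t := by
    cases l with
    | nil => exact absurd rfl hne
    | cons b t => exact ⟨b, t, rfl⟩
  set l := b :: t with hl
  have hpos := PQ_pos l hall
  have hQ1 : 1 ≤ (PQ l).2 := by
    have ht := PQ_pos t (fun x hx => hall x (List.mem_cons_of_mem _ hx))
    simp only [hl, PQ]
    omega
  have hP : 0 < (PQ l).1 := by omega
  have hQ : 0 < (PQ l).2 := by omega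
  have heq : hj l = ((PQ l).1 : ℚ) / ((PQ l).2 : ℚ) := hj_eq l hall
  rw [hhj] at heq
  have hQQ : ((PQ l).2 : ℚ) ≠ 0 := by exact_mod_cast hQ.ne'
  have hnQ : ((n : ℤ) : ℚ) ≠ 0 := by exact_mod_cast (by exact_mod_cast hn.ne' : (n:ℤ) ≠ 0)
  rw [div_eq_div_iff (by exact_mod_cast hn.ne' : ((n:ℚ)) ≠ 0) hQQ] at heq
  have hcross : (m : ℤ) * (PQ l).2 = (PQ l).1 * (n : ℤ) := by exact_mod_cast heq
  have hcopPQ : IsCoprime (PQ l).1 (PQ l).2 := PQ_cop l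
  have hcopmn : IsCoprime (m : ℤ) (n : ℤ) := by
    rw [Int.isCoprime_iff_gcd_eq_one]
    exact_mod_cast hcop
  have h1 : (PQ l).1 ∣ (m : ℤ) := by
    refine hcopPQ.dvd_of_dvd_mul_right ?_
    exact ⟨n, by linarith [hcross]⟩
  have h2 : (m : ℤ) ∣ (PQ l).1 := by
    refine hcopmn.dvd_of_dvd_mul_right ?_
    exact ⟨(PQ l).2, by linarith [hcross]⟩
  exact (Int.dvd_antisymm hP.le (by positivity) h1 h2).symm ▸ rfl
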